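/- Every two-qubit density matrix ρ admits an optimal decomposition in which every pure state has the same concurrence, equal to the concurrence of assistance: there exists a finite family of nonzero vectors χ_k : Fin 2 → Fin 2 → ℂ with ρ((i,j),(i',j')) = ∑_k χ_k i j · conj(χ_k i' j') such that for every k, the normalized concurrence satisfies 2·|χ_k 0 0 · χ_k 1 1 − χ_k 0 1 · χ_k 1 0| / ‖χ_k‖² = Tr R(ρ) (so in particular ∑_k 2·|χ_k 0 0 · χ_k 1 1 − χ_k 0 1 · χ_k 1 0| = Tr R(ρ)). -/

import Mathlib

open Matrix Complex Kronecker Finset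
open scoped ComplexOrder

noncomputable section

abbrev TwoQubitMat := Matrix (Fin 2 × Fin 2) (Fin 2 × Fin 2) ℂ

def sigmaY : Matrix (Fin 2) (Fin 2) ℂ := !![0, -Complex.I; Complex.I, 0]

def spinFlip (ρ : TwoQubitMat) : TwoQubitMat :=
  (sigmaY ⊗ₖ sigmaY) * ρ.map (starRingEnd ℂ) * (sigmaY ⊗ₖ sigmaY)

def matSqrt {m : Type*} [Fintype m] [DecidableEq m] (M : Matrix m m ℂ) : Matrix m m ℂ :=
  open scoped Classical in
  if h : M.PosSemidef then
    h.1.eigenvectorUnitary.1 * diagonal ((↑) ∘ (h.1.eigenvalues · |>.sqrt)) *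
      (star h.1.eigenvectorUnitary : Matrix m m ℂ)
  else 0

def Rmat (ρ : TwoQubitMat) : TwoQubitMat :=
  matSqrt (matSqrt ρ * spinFlip ρ * matSqrt ρ)

def CoA (ρ : TwoQubitMat) : ℝ := (Rmat ρ).trace.re

def lmin2 (M : Matrix (Fin 2) (Fin 2) ℂ) : ℝ :=
  if h : M.IsHermitian then min (h.eigenvalues 0) (h.eigenvalues 1) else 0

def maxEig4 (M : TwoQubitMat) : ℝ :=
  if h : M.IsHermitian then Finset.univ.sup' Finset.univ_nonempty h.eigenvalues else 0

def Conc (ρ : TwoQubitMat) : ℝ := max 0 (2 * maxEig4 (Rmat ρ) - (Rmat ρ).trace.re)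

def eigMultiset (M : TwoQubitMat) : Multiset ℝ :=
  if h : M.IsHermitian then Finset.univ.val.map h.eigenvalues else 0

def rhoAB (ψ : Fin 2 → Fin 2 → Fin 2 → ℂ) : TwoQubitMat :=
  fun p q => ∑ l, ψ p.1 p.2 l * (starRingEnd ℂ) (ψ q.1 q.2 l)

def rhoAS (ψ : Fin 2 → Fin 2 → Fin 2 → ℂ) : TwoQubitMat :=
  fun p q => ∑ j, ψ p.1 j p.2 * (starRingEnd ℂ) (ψ q.1 j q.2)

def rhoA (ψ : Fin 2 → Fin 2 → Fin 2 → ℂ) : Matrix (Fin 2) (Fin 2) ℂ :=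
  fun i i' => ∑ j, ∑ l, ψ i j l * (starRingEnd ℂ) (ψ i' j l)

/-- Concurrence of a (possibly unnormalized) two-qubit vector. -/
def conc2 (φ : Fin 2 → Fin 2 → ℂ) : ℝ :=
  2 * ‖φ 0 0 * φ 1 1 - φ 0 1 * φ 1 0‖

section MatSqrtAux
open scoped MatrixOrder

lemma matSqrt_eq_sqrt {m : Type*} [Fintype m] [DecidableEq m] {M : Matrix m m ℂ}
    (hM : M.PosSemidef) : matSqrt M = CFC.sqrt M := by
  rw [CFC.sqrt_eq_real_sqrt M hM.nonneg, cfcₙ_eq_cfc, hM.1.cfc_eq, matSqrt, dif_pos hM]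
  simp [IsHermitian.cfc, Function.comp_def]

lemma matSqrt_posSemidef {m : Type*} [Fintype m] [DecidableEq m] {M : Matrix m m ℂ}
    (hM : M.PosSemidef) : (matSqrt M).PosSemidef := by
  rw [matSqrt_eq_sqrt hM]; exact (CFC.sqrt_nonneg M).posSemidef

lemma matSqrt_mul_self {m : Type*} [Fintype m] [DecidableEq m] {M : Matrix m m ℂ}
    (hM : M.PosSemidef) : matSqrt M * matSqrt M = M := by
  rw [matSqrt_eq_sqrt hM]; exact CFC.sqrt_mul_sqrt_self M hM.nonneg

lemma eq_matSqrt_of_sq_eq {m : Type*} [Fintype m] [DecidableEq m] {B M : Matrix m m ℂ}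
    (hB : B.PosSemidef) (hM : M.PosSemidef) (h : B ^ 2 = M) : B = matSqrt M := by
  rw [matSqrt_eq_sqrt hM]
  exact (CFC.sqrt_unique (by rw [← h, sq]) hB.nonneg).symm

end MatSqrtAux



-- ## Auxiliary development

def MCm {ι κ : Type*} (M : Matrix ι κ ℂ) : Matrix ι κ ℂ := M.map (starRingEnd ℂ)

lemma MCm_apply {ι κ : Type*} (M : Matrix ι κ ℂ) (i : ι) (j : κ) :
    MCm M i j = (starRingEnd ℂ) (M i j) := rfl

lemma MCm_mul {ι κ μ : Type*} [Fintype κ] (M : Matrix ι κ ℂ) (N : Matrix κ μ ℂ) :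
    MCm (M * N) = MCm M * MCm N := Matrix.map_mul

lemma MCm_MCm {ι κ : Type*} (M : Matrix ι κ ℂ) : MCm (MCm M) = M := by
  ext i j; simp [MCm_apply]

lemma MCm_one {ι : Type*} [Fintype ι] [DecidableEq ι] : MCm (1 : Matrix ι ι ℂ) = 1 := by
  ext i j; simp [MCm_apply, Matrix.one_apply, apply_ite (starRingEnd ℂ)]

lemma MCm_transpose {ι κ : Type*} (M : Matrix ι κ ℂ) : (MCm M)ᵀ = MCm Mᵀ := by
  ext i j; rfl

lemma conjT_eq_MCm {ι κ : Type*} (M : Matrix ι κ ℂ) : Mᴴ = MCm Mᵀ := by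
  ext i j; rfl

lemma MCm_conjT {ι κ : Type*} (M : Matrix ι κ ℂ) : (MCm M)ᴴ = Mᵀ := by
  ext i j; simp [conjTranspose_apply, MCm_apply]

lemma dot_star_self {n : Type*} [Fintype n] (x : n → ℂ) :
    star x ⬝ᵥ x = ((∑ i, Complex.normSq (x i) : ℝ) : ℂ) := by
  push_cast
  simp [dotProduct, Complex.normSq_eq_conj_mul_self]

lemma sum_normSq_pos {n : Type*} [Fintype n] {x : n → ℂ} (hx : x ≠ 0) :
    0 < ∑ i, Complex.normSq (x i) := by
  have h1 : ∃ i, x i ≠ 0 := by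
    by_contra h; push_neg at h; exact hx (funext h)
  obtain ⟨i, hi⟩ := h1
  have := Complex.normSq_pos.mpr hi
  exact Finset.sum_pos' (fun j _ => Complex.normSq_nonneg _) ⟨i, Finset.mem_univ i, this⟩

lemma sum_normSq_smul {n : ℕ} (c : ℝ) (x : Fin n → ℂ) :
    ∑ i, Complex.normSq (((c : ℂ) • x) i) = c ^ 2 * ∑ i, Complex.normSq (x i) := by
  rw [Finset.mul_sum]
  refine Finset.sum_congr rfl fun i _ => ?_
  show Complex.normSq ((c : ℂ) * x i) = c ^ 2 * Complex.normSq (x i)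
  rw [Complex.normSq_mul, Complex.normSq_ofReal, sq]

lemma normalize_eigvec {n : ℕ} {A : Matrix (Fin n) (Fin n) ℂ} {σ : ℝ} {x : Fin n → ℂ}
    (hx : x ≠ 0) (hAx : A *ᵥ star x = (σ : ℂ) • x) :
    ∃ v : Fin n → ℂ, star v ⬝ᵥ v = 1 ∧ A *ᵥ star v = (σ : ℂ) • v := by
  have hns : 0 < ∑ i, Complex.normSq (x i) := sum_normSq_pos hx
  set c : ℝ := (Real.sqrt (∑ i, Complex.normSq (x i)))⁻¹ with hcdef
  refine ⟨(c : ℂ) • x, ?_, ?_⟩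
  · rw [dot_star_self, sum_normSq_smul, hcdef, inv_pow, Real.sq_sqrt hns.le,
      inv_mul_cancel₀ (ne_of_gt hns)]
    norm_num
  · have hs : star ((c : ℂ) • x) = (c : ℂ) • star x := by
      funext i; simp [Pi.star_apply, Pi.smul_apply, star_mul']
    rw [hs, Matrix.mulVec_smul, hAx, smul_smul, smul_smul, mul_comm]

lemma takagi_step {n : ℕ} (A : Matrix (Fin n) (Fin n) ℂ) (hA : Aᵀ = A) (hne : A ≠ 0) :
    ∃ (σ : ℝ) (v : Fin n → ℂ), 0 < σ ∧ star v ⬝ᵥ v = 1 ∧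
      A *ᵥ star v = (σ : ℂ) • v := by
  classical
  have hM : (A * Aᴴ).PosSemidef := posSemidef_self_mul_conjTranspose A
  have hMne : A * Aᴴ ≠ 0 := fun h => hne (Matrix.self_mul_conjTranspose_eq_zero.mp h)
  obtain ⟨v₀, t, ht0, hv0, hMv⟩ := hM.1.exists_eigenvector_of_ne_zero hMne
  -- t > 0
  have hns : 0 < ∑ i, Complex.normSq (v₀ i) := sum_normSq_pos hv0
  have hq := hM.dotProduct_mulVec_nonneg v₀
  rw [hMv] at hq
  have hdot : star v₀ ⬝ᵥ (t • v₀) = ((t * ∑ i, Complex.normSq (v₀ i) : ℝ) : ℂ) := by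
    have h1 : star v₀ ⬝ᵥ (t • v₀) = (t : ℂ) * (star v₀ ⬝ᵥ v₀) := by
      simp only [dotProduct, Pi.smul_apply, Pi.star_apply, Complex.real_smul, Finset.mul_sum]
      exact Finset.sum_congr rfl fun i _ => by ring
    rw [h1, dot_star_self]; push_cast; ring
  rw [hdot] at hq
  have ht_nonneg : 0 ≤ t * ∑ i, Complex.normSq (v₀ i) := by exact_mod_cast hq
  have ht : 0 < t := by
    rcases lt_trichotomy t 0 with h | h | h
    · exfalso; nlinarith
    · exact absurd h ht0
    · exact h
  set σ := Real.sqrt t with hσdef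
  have hσ : 0 < σ := Real.sqrt_pos.mpr ht
  have hσ2 : (σ : ℝ) * σ = t := Real.mul_self_sqrt ht.le
  have hAconjA : A * MCm A = A * Aᴴ := by rw [conjT_eq_MCm, hA]
  have hstar_mulvec : ∀ x : Fin n → ℂ, star (A *ᵥ star x) = (MCm A) *ᵥ x := by
    intro x
    funext i
    simp [Matrix.mulVec, dotProduct, MCm_apply, Pi.star_apply]
  have key : ∃ x : Fin n → ℂ, x ≠ 0 ∧ A *ᵥ star x = (σ : ℂ) • x := by
    by_cases hw0 : A *ᵥ star v₀ + (σ : ℂ) • v₀ = 0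
    · -- A *ᵥ star v₀ = -(σ • v₀); use I • v₀
      have hAu : A *ᵥ star v₀ = -((σ : ℂ) • v₀) := eq_neg_of_add_eq_zero_left hw0
      refine ⟨Complex.I • v₀, ?_, ?_⟩
      · intro h
        apply hv0
        funext i
        have := congrFun h i
        simp only [Pi.smul_apply, smul_eq_mul, Pi.zero_apply] at this ⊢
        exact (mul_eq_zero.mp this).resolve_left Complex.I_ne_zero
      · have hsI : star (Complex.I • v₀) = (-Complex.I) • star v₀ := by
          funext i
          simp [Pi.star_apply, Pi.smul_apply, star_mul']
        rw [hsI, Matrix.mulVec_smul, hAu, smul_neg, smul_smul, smul_smul]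
        rw [← neg_smul]
        congr 1
        ring
    · refine ⟨A *ᵥ star v₀ + (σ : ℂ) • v₀, hw0, ?_⟩
      have hsw : star (A *ᵥ star v₀ + (σ : ℂ) • v₀) = (MCm A) *ᵥ v₀ + (σ : ℂ) • star v₀ := by
        rw [star_add, hstar_mulvec]
        congr 1
        funext i
        simp [Pi.star_apply, Pi.smul_apply, star_mul']
      rw [hsw, Matrix.mulVec_add, Matrix.mulVec_smul, Matrix.mulVec_mulVec, hAconjA, hMv,
        smul_add, smul_smul]
      have h2 : (t : ℝ) • v₀ = ((σ : ℂ) * (σ : ℂ)) • v₀ := by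
        funext i
        rw [Pi.smul_apply, Pi.smul_apply, Complex.real_smul, smul_eq_mul, ← hσ2]
        push_cast
        ring
      rw [h2, add_comm]
  obtain ⟨x, hx0, hAx⟩ := key
  obtain ⟨v, hv1, hv2⟩ := normalize_eigvec hx0 hAx
  exact ⟨σ, v, hσ, hv1, hv2⟩


lemma exists_unitary_col {n : ℕ} (v : Fin (n + 1) → ℂ) (hv : star v ⬝ᵥ v = 1) :
    ∃ U : Matrix (Fin (n + 1)) (Fin (n + 1)) ℂ, Uᴴ * U = 1 ∧ ∀ j, U j 0 = v j := by
  classical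
  set E := EuclideanSpace ℂ (Fin (n + 1))
  let vE : E := WithLp.toLp 2 v
  have hcard : Module.finrank ℂ E = Fintype.card (Fin (n + 1)) := by
    simp [E, finrank_euclideanSpace]
  have hortho : Orthonormal ℂ (Set.restrict ({0} : Set (Fin (n + 1))) (fun _ => vE)) := by
    rw [orthonormal_iff_ite]
    intro i j
    have hij : i = j := by
      apply Subtype.ext
      have hi := i.2; have hj := j.2
      simp only [Set.mem_singleton_iff] at hi hj
      rw [hi, hj]
    subst hij
    simp only [if_pos rfl]
    show inner ℂ vE vE = (1 : ℂ)
    rw [PiLp.inner_apply]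
    simpa [RCLike.inner_apply, dotProduct, vE, Complex.conj_mul'] using hv
  obtain ⟨b, hb⟩ := hortho.exists_orthonormalBasis_extension_of_card_eq hcard
  refine ⟨Matrix.of fun j i => b i j, ?_, ?_⟩
  · ext i k
    rw [Matrix.mul_apply, Matrix.one_apply]
    have := (orthonormal_iff_ite.mp b.orthonormal) i k
    rw [PiLp.inner_apply] at this
    simpa [Matrix.conjTranspose_apply, RCLike.inner_apply, mul_comm] using this
  · intro j
    have h0 := hb 0 rfl
    show (b 0).ofLp j = v j
    rw [h0]

theorem takagi_fin : ∀ (n : ℕ) (A : Matrix (Fin n) (Fin n) ℂ), Aᵀ = A →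
    ∃ (U : Matrix (Fin n) (Fin n) ℂ) (d : Fin n → ℝ),
      Uᴴ * U = 1 ∧ (∀ i, 0 ≤ d i) ∧
      A = U * Matrix.diagonal (fun i => (d i : ℂ)) * Uᵀ := by
  intro n
  induction n with
  | zero =>
    intro A _
    refine ⟨1, 0, by simp, fun i => le_rfl, ?_⟩
    ext i j
    exact i.elim0
  | succ n IH =>
    intro A hA
    by_cases hne : A = 0
    · refine ⟨1, 0, by simp, fun i => le_rfl, ?_⟩
      simp [hne]
    · obtain ⟨σ, v, hσ, hv_norm, hAv⟩ := takagi_step A hA hne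
      have hsv_norm : star (star v) ⬝ᵥ (star v) = 1 := by
        rw [dot_star_self] at hv_norm ⊢
        have h1 : (∑ i, Complex.normSq (v i)) = 1 := by exact_mod_cast hv_norm
        have h2 : ∀ i, Complex.normSq (star v i) = Complex.normSq (v i) := by
          intro i; simp [Pi.star_apply]
        simp only [h2]
        exact_mod_cast h1
      obtain ⟨U₁, hU₁, hcol⟩ := exists_unitary_col (star v) hsv_norm
      have hU₁' : U₁ * U₁ᴴ = 1 := mul_eq_one_comm.mp hU₁
      set B := U₁ᵀ * A * U₁ with hBdef
      have hBsym : Bᵀ = B := by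
        rw [hBdef]
        rw [Matrix.transpose_mul, Matrix.transpose_mul, hA, Matrix.transpose_transpose,
          Matrix.mul_assoc]
      have hB0 : ∀ k, B 0 k = if (0 : Fin (n+1)) = k then (σ : ℂ) else 0 := by
        intro k
        rw [hBdef, Matrix.mul_apply]
        have hBA : ∀ q, (U₁ᵀ * A) 0 q = (σ : ℂ) * v q := by
          intro q
          rw [Matrix.mul_apply]
          have : ∀ p, U₁ᵀ 0 p * A p q = A q p * star v p := by
            intro p
            rw [Matrix.transpose_apply, hcol p]
            rw [show A p q = A q p from congrFun (congrFun hA q) p]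
            ring
          simp only [this]
          have : ∑ p, A q p * star v p = (A *ᵥ star v) q := by
            rw [Matrix.mulVec, dotProduct]
          rw [this, hAv]
          simp [Complex.real_smul]
        simp only [hBA]
        have : ∀ q, (σ : ℂ) * v q * U₁ q k = (σ : ℂ) * (star (U₁ q 0) * U₁ q k) := by
          intro q
          rw [hcol q]
          simp only [Pi.star_apply, star_star]
          ring
        simp only [this, ← Finset.mul_sum]
        have : ∑ q, star (U₁ q 0) * U₁ q k = (U₁ᴴ * U₁) 0 k := by
          rw [Matrix.mul_apply]
          simp [Matrix.conjTranspose_apply]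
        rw [this, hU₁, Matrix.one_apply]
        split <;> simp
      have hBk0 : ∀ k, B k 0 = if (0 : Fin (n+1)) = k then (σ : ℂ) else 0 := by
        intro k
        have : B k 0 = Bᵀ 0 k := rfl
        rw [this, hBsym, hB0]
      -- submatrix
      set A' : Matrix (Fin n) (Fin n) ℂ := Matrix.of (fun i j => B i.succ j.succ) with hA'def
      have hA'sym : A'ᵀ = A' := by
        ext i j
        show B j.succ i.succ = B i.succ j.succ
        exact congrFun (congrFun hBsym i.succ) j.succ
      obtain ⟨U', d', hU', hd', hA'⟩ := IH A' hA'sym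
      have hA'ent : ∀ i j, A' i j = ∑ k, U' i k * (d' k : ℂ) * U' j k := by
        intro i j
        rw [hA']
        rw [Matrix.mul_apply]
        refine Finset.sum_congr rfl fun k _ => ?_
        rw [Matrix.mul_diagonal, Matrix.transpose_apply]
      -- assemble block unitary
      set U₂ : Matrix (Fin (n+1)) (Fin (n+1)) ℂ := Matrix.of (fun i j =>
        Fin.cases (Fin.cases (1 : ℂ) (fun _ => 0) j)
          (fun i' => Fin.cases 0 (fun j' => U' i' j') j) i) with hU₂def
      have hU₂00 : U₂ 0 0 = 1 := rfl
      have hU₂0s : ∀ j : Fin n, U₂ 0 j.succ = 0 := fun j => rfl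
      have hU₂s0 : ∀ i : Fin n, U₂ i.succ 0 = 0 := fun i => rfl
      have hU₂ss : ∀ i j : Fin n, U₂ i.succ j.succ = U' i j := fun i j => rfl
      set dd : Fin (n+1) → ℝ := Fin.cons σ d' with hdddef
      have hdd0 : dd 0 = σ := rfl
      have hdds : ∀ i : Fin n, dd i.succ = d' i := fun i => rfl
      -- U₂ unitary
      have hU₂unit : U₂ᴴ * U₂ = 1 := by
        ext i k
        rw [Matrix.mul_apply, Matrix.one_apply]
        simp only [Matrix.conjTranspose_apply]
        rw [Fin.sum_univ_succ]
        induction i using Fin.cases with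
        | zero =>
          induction k using Fin.cases with
          | zero => simp [hU₂00, hU₂s0]
          | succ k' => simp [hU₂00, hU₂0s, hU₂s0, (Fin.succ_ne_zero k').symm]
        | succ i' =>
          induction k using Fin.cases with
          | zero => simp [hU₂00, hU₂0s, hU₂s0, Fin.succ_ne_zero i']
          | succ k' =>
            have := congrFun (congrFun hU' i') k'
            rw [Matrix.mul_apply, Matrix.one_apply] at this
            simp only [Matrix.conjTranspose_apply] at this
            simp only [hU₂ss, hU₂0s, star_zero, zero_mul, zero_add]
            rw [this]
            simp [Fin.succ_inj]
      -- B = U₂ D U₂ᵀ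
      have hBdec : B = U₂ * Matrix.diagonal (fun i => (dd i : ℂ)) * U₂ᵀ := by
        ext i j
        have hent : (U₂ * Matrix.diagonal (fun i => (dd i : ℂ)) * U₂ᵀ) i j
            = ∑ k, U₂ i k * (dd k : ℂ) * U₂ j k := by
          rw [Matrix.mul_apply]
          refine Finset.sum_congr rfl fun k _ => ?_
          rw [Matrix.mul_diagonal, Matrix.transpose_apply]
        rw [hent, Fin.sum_univ_succ]
        induction i using Fin.cases with
        | zero =>
          induction j using Fin.cases with
          | zero => simp [hU₂00, hU₂0s, hdd0, hB0]
          | succ j' => simp [hU₂00, hU₂0s, hU₂s0, hdd0, hB0, Fin.succ_ne_zero j',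
              (Fin.succ_ne_zero j').symm]
        | succ i' =>
          induction j using Fin.cases with
          | zero => simp [hU₂00, hU₂0s, hU₂s0, hdd0, hBk0, Fin.succ_ne_zero i',
              (Fin.succ_ne_zero i').symm]
          | succ j' =>
            simp only [hU₂ss, hU₂s0, hdds, zero_mul, mul_zero, zero_add]
            have : B i'.succ j'.succ = A' i' j' := rfl
            rw [this, hA'ent]
      refine ⟨MCm U₁ * U₂, dd, ?_, ?_, ?_⟩
      · rw [Matrix.conjTranspose_mul]
        have hWHW : (MCm U₁)ᴴ * (MCm U₁) = 1 := by
          rw [MCm_conjT]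
          have : U₁ᵀ = MCm (U₁ᴴ) := by rw [conjT_eq_MCm, MCm_MCm]
          rw [this, ← MCm_mul, hU₁, MCm_one]
        calc U₂ᴴ * (MCm U₁)ᴴ * (MCm U₁ * U₂)
            = U₂ᴴ * ((MCm U₁)ᴴ * (MCm U₁)) * U₂ := by
              simp only [Matrix.mul_assoc]
          _ = 1 := by rw [hWHW, Matrix.mul_one, hU₂unit]
      · intro i
        induction i using Fin.cases with
        | zero => exact hσ.le
        | succ i' => exact hd' i'
      · have hWB : MCm U₁ * B * (MCm U₁)ᵀ = A := by
          rw [hBdef]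
          have h1 : MCm U₁ * U₁ᵀ = 1 := by
            have : U₁ᵀ = MCm (U₁ᴴ) := by rw [conjT_eq_MCm, MCm_MCm]
            rw [this, ← MCm_mul, hU₁', MCm_one]
          have h2 : U₁ * (MCm U₁)ᵀ = 1 := by
            rw [MCm_transpose, ← conjT_eq_MCm, hU₁']
          calc MCm U₁ * (U₁ᵀ * A * U₁) * (MCm U₁)ᵀ
              = (MCm U₁ * U₁ᵀ) * A * (U₁ * (MCm U₁)ᵀ) := by
                simp only [Matrix.mul_assoc]
            _ = A := by rw [h1, h2, Matrix.one_mul, Matrix.mul_one]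
        rw [Matrix.transpose_mul]
        calc A = MCm U₁ * B * (MCm U₁)ᵀ := hWB.symm
          _ = MCm U₁ * (U₂ * Matrix.diagonal (fun i => (dd i : ℂ)) * U₂ᵀ) * (MCm U₁)ᵀ := by
              rw [← hBdec]
          _ = MCm U₁ * U₂ * Matrix.diagonal (fun i => (dd i : ℂ)) * (U₂ᵀ * (MCm U₁)ᵀ) := by
              simp only [Matrix.mul_assoc]

theorem takagi {ι : Type*} [Fintype ι] [DecidableEq ι] (A : Matrix ι ι ℂ) (hA : Aᵀ = A) :
    ∃ (U : Matrix ι ι ℂ) (d : ι → ℝ),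
      Uᴴ * U = 1 ∧ (∀ i, 0 ≤ d i) ∧
      A = U * Matrix.diagonal (fun i => (d i : ℂ)) * Uᵀ := by
  classical
  set e := Fintype.equivFin ι with hedef
  set B := A.submatrix e.symm e.symm with hBdef
  have hBsym : Bᵀ = B := by
    rw [hBdef, Matrix.transpose_submatrix, hA]
  obtain ⟨U₀, d₀, hU₀, hd₀, hdec⟩ := takagi_fin _ B hBsym
  refine ⟨U₀.submatrix e e, fun i => d₀ (e i), ?_, fun i => hd₀ (e i), ?_⟩
  · ext i j
    rw [Matrix.mul_apply, Matrix.one_apply]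
    have h := congrFun (congrFun hU₀ (e i)) (e j)
    rw [Matrix.mul_apply, Matrix.one_apply] at h
    simp only [Matrix.conjTranspose_apply] at h
    simp only [Matrix.conjTranspose_apply, Matrix.submatrix_apply]
    rw [← Equiv.sum_comp e (fun k => star (U₀ k (e i)) * U₀ k (e j))] at h
    rw [h]
    simp [EmbeddingLike.apply_eq_iff_eq]
  · ext i j
    have hAeq : A i j = B (e i) (e j) := by simp [hBdef]
    rw [hAeq, hdec]
    have h1 : (U₀ * Matrix.diagonal (fun i => (d₀ i : ℂ)) * U₀ᵀ) (e i) (e j)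
        = ∑ k, U₀ (e i) k * (d₀ k : ℂ) * U₀ (e j) k := by
      rw [Matrix.mul_apply]
      exact Finset.sum_congr rfl fun k _ => by
        rw [Matrix.mul_diagonal, Matrix.transpose_apply]
    have h2 : (U₀.submatrix e e * Matrix.diagonal (fun i => ((d₀ (e i) : ℝ) : ℂ))
          * (U₀.submatrix e e)ᵀ) i j
        = ∑ k, U₀ (e i) (e k) * ((d₀ (e k) : ℝ) : ℂ) * U₀ (e j) (e k) := by
      rw [Matrix.mul_apply]
      exact Finset.sum_congr rfl fun k _ => by
        rw [Matrix.mul_diagonal, Matrix.transpose_apply, Matrix.submatrix_apply,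
          Matrix.submatrix_apply]
    rw [h1, h2]
    exact (Equiv.sum_comp e (fun k => U₀ (e i) k * ((d₀ k : ℝ) : ℂ) * U₀ (e j) k)).symm

lemma triple_diag {ι R : Type*} [Fintype ι] [CommRing R] (M H : Matrix ι ι R) (j k : ι) :
    (Mᵀ * H * M) j k = ∑ p, ∑ q, M p j * H p q * M q k := by
  rw [Matrix.mul_apply]
  simp only [Matrix.mul_apply, Matrix.transpose_apply, Finset.sum_mul]
  rw [Finset.sum_comm]

lemma sum_pair_support {ι : Type*} [Fintype ι] [DecidableEq ι] {a b : ι} (hab : a ≠ b)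
    (f : ι → ℝ) (hf : ∀ i, i ≠ a → i ≠ b → f i = 0) : ∑ i, f i = f a + f b := by
  rw [← Finset.sum_pair hab]
  symm
  apply Finset.sum_subset (Finset.subset_univ _)
  intro x _ hx
  simp only [Finset.mem_insert, Finset.mem_singleton, not_or] at hx
  exact hf x hx.1 hx.2

lemma givens_exists {ι : Type*} [Fintype ι] [DecidableEq ι] (H : Matrix ι ι ℝ) (hsym : Hᵀ = H)
    {a b : ι} (hab : a ≠ b) (ha : 0 < H a a) (hb : H b b < 0) :
    ∃ G : Matrix ι ι ℝ, Gᵀ * G = 1 ∧ (Gᵀ * H * G) a a = 0 ∧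
      ∀ j, j ≠ a → j ≠ b → (Gᵀ * H * G) j j = H j j := by
  classical
  set Av := H a a with hAv
  set Bv := H b b with hBv
  set Cv := H a b with hCv
  have hBA : H b a = Cv := congrFun (congrFun hsym a) b
  have hdisc : 0 < Cv ^ 2 - Av * Bv := by nlinarith
  have hs2 : (Real.sqrt (Cv ^ 2 - Av * Bv)) ^ 2 = Cv ^ 2 - Av * Bv := Real.sq_sqrt hdisc.le
  set t : ℝ := (-Cv + Real.sqrt (Cv ^ 2 - Av * Bv)) / Bv with htdef
  have hBne : Bv ≠ 0 := ne_of_lt hb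
  have h1 : t * Bv = -Cv + Real.sqrt (Cv ^ 2 - Av * Bv) := by
    rw [htdef]; field_simp
  have hquad : Bv * t ^ 2 + 2 * Cv * t + Av = 0 := by
    have h2 : Bv * (Bv * t ^ 2 + 2 * Cv * t + Av)
        = (t * Bv) ^ 2 + 2 * Cv * (t * Bv) + Av * Bv := by ring
    have h3 : (t * Bv) ^ 2 + 2 * Cv * (t * Bv) + Av * Bv = 0 := by
      rw [h1]
      linear_combination hs2
    have := h2.trans h3
    exact (mul_eq_zero.mp this).resolve_left hBne
  set r : ℝ := Real.sqrt (1 + t ^ 2) with hrdef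
  have hrpos : 0 < r := Real.sqrt_pos.mpr (by positivity)
  have hr2 : r ^ 2 = 1 + t ^ 2 := Real.sq_sqrt (by positivity)
  set co : ℝ := r⁻¹ with hcodef
  set si : ℝ := t * r⁻¹ with hsidef
  have hunit : co ^ 2 + si ^ 2 = 1 := by
    have : co ^ 2 + si ^ 2 = (1 + t ^ 2) * (r ^ 2)⁻¹ := by
      rw [hcodef, hsidef]; ring
    rw [this, hr2]
    field_simp
  have hzero : co ^ 2 * Av + 2 * co * si * Cv + si ^ 2 * Bv = 0 := by
    have h4 : co ^ 2 * Av + 2 * co * si * Cv + si ^ 2 * Bv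
        = (Bv * t ^ 2 + 2 * Cv * t + Av) * (r ^ 2)⁻¹ := by
      rw [hcodef, hsidef]; ring
    rw [h4, hquad, zero_mul]
  set G : Matrix ι ι ℝ := Matrix.of (fun i j =>
    if j = a then (if i = a then co else if i = b then si else 0)
    else if j = b then (if i = a then -si else if i = b then co else 0)
    else if i = j then 1 else 0) with hGdef
  have hGa : ∀ i, G i a = if i = a then co else if i = b then si else 0 := by
    intro i; simp [hGdef]
  have hGb : ∀ i, G i b = if i = a then -si else if i = b then co else 0 := by
    intro i; simp [hGdef, hab.symm]
  have hGother : ∀ i j, j ≠ a → j ≠ b → G i j = if i = j then 1 else 0 := by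
    intro i j hja hjb; simp [hGdef, hja, hjb]
  refine ⟨G, ?_, ?_, ?_⟩
  · -- orthogonality
    ext j k
    rw [Matrix.mul_apply, Matrix.one_apply]
    simp only [Matrix.transpose_apply]
    by_cases hja : a = j
    · subst hja
      by_cases hka : a = k
      · subst hka
        rw [sum_pair_support hab _ (fun i hia hib => by rw [hGa i, if_neg hia, if_neg hib]; ring)]
        rw [hGa a, hGa b, if_pos rfl, if_neg hab.symm, if_pos rfl, if_pos rfl]
        linear_combination hunit
      · by_cases hkb : b = k
        · subst hkb
          rw [sum_pair_support hab _ (fun i hia hib => by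
            rw [hGa i, if_neg hia, if_neg hib]; ring)]
          rw [hGa a, hGa b, hGb a, hGb b]
          simp [hab, Ne.symm hab]
          ring
        · rw [sum_pair_support hab _ (fun i hia hib => by
            rw [hGa i, if_neg hia, if_neg hib]; ring)]
          rw [hGa a, hGa b, hGother a k (Ne.symm hka) (Ne.symm hkb),
            hGother b k (Ne.symm hka) (Ne.symm hkb)]
          simp [hab, Ne.symm hab, hka, hkb]
    · by_cases hjb : b = j
      · subst hjb
        by_cases hka : a = k
        · subst hka
          rw [sum_pair_support hab _ (fun i hia hib => by
            rw [hGb i, if_neg hia, if_neg hib]; ring)]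
          rw [hGa a, hGa b, hGb a, hGb b]
          simp [hab, Ne.symm hab]
          ring
        · by_cases hkb : b = k
          · subst hkb
            rw [sum_pair_support hab _ (fun i hia hib => by
              rw [hGb i, if_neg hia, if_neg hib]; ring)]
            rw [hGb a, hGb b, if_pos rfl, if_neg hab.symm, if_pos rfl, if_pos rfl]
            linear_combination hunit
          · rw [sum_pair_support hab _ (fun i hia hib => by
              rw [hGb i, if_neg hia, if_neg hib]; ring)]
            rw [hGb a, hGb b, hGother a k (Ne.symm hka) (Ne.symm hkb),
              hGother b k (Ne.symm hka) (Ne.symm hkb)]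
            simp [hab, Ne.symm hab, hka, hkb]
      · -- j ∉ {a,b}
        have hrow : ∀ i, G i j = if i = j then 1 else 0 :=
          fun i => hGother i j (Ne.symm hja) (Ne.symm hjb)
        rw [Finset.sum_eq_single j (fun i _ hij => by rw [hrow i, if_neg hij]; ring)
          (fun h => absurd (Finset.mem_univ j) h)]
        rw [hrow j, if_pos rfl, one_mul]
        by_cases hka : a = k
        · subst hka
          rw [hGa j, if_neg (Ne.symm hja), if_neg (Ne.symm hjb), if_neg (fun h => hja h.symm)]
        · by_cases hkb : b = k
          · subst hkb
            rw [hGb j, if_neg (Ne.symm hja), if_neg (Ne.symm hjb), if_neg (fun h => hjb h.symm)]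
          · rw [hGother j k (Ne.symm hka) (Ne.symm hkb)]
  · -- (GᵀHG) a a = 0
    rw [triple_diag]
    rw [sum_pair_support hab _ (fun p hpa hpb => by
      refine Finset.sum_eq_zero fun q _ => ?_
      rw [hGa p, if_neg hpa, if_neg hpb]; ring)]
    have hfa : ∑ q, G a a * H a q * G q a = co * H a a * co + co * H a b * si := by
      rw [sum_pair_support hab _ (fun q hqa hqb => by rw [hGa q, if_neg hqa, if_neg hqb]; ring)]
      rw [hGa a, hGa b, if_pos rfl, if_neg hab.symm, if_pos rfl]
    have hfb : ∑ q, G b a * H b q * G q a = si * H b a * co + si * H b b * si := by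
      rw [sum_pair_support hab _ (fun q hqa hqb => by rw [hGa q, if_neg hqa, if_neg hqb]; ring)]
      rw [hGa a, hGa b, if_pos rfl, if_neg hab.symm, if_pos rfl]
    rw [hfa, hfb]
    rw [hBA, ← hAv, ← hBv, ← hCv]
    linear_combination hzero
  · -- other diagonal entries unchanged
    intro j hja hjb
    rw [triple_diag]
    have hrow : ∀ i, G i j = if i = j then 1 else 0 := fun i => hGother i j hja hjb
    rw [Finset.sum_eq_single j (fun p _ hpj => by
      refine Finset.sum_eq_zero fun q _ => ?_
      rw [hrow p, if_neg hpj]; ring)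
      (fun h => absurd (Finset.mem_univ j) h)]
    rw [Finset.sum_eq_single j (fun q _ hqj => by rw [hrow q, if_neg hqj]; ring)
      (fun h => absurd (Finset.mem_univ j) h)]
    rw [hrow j, if_pos rfl]
    ring

lemma zero_diag_aux {ι : Type*} [Fintype ι] [DecidableEq ι] :
    ∀ (k : ℕ) (H : Matrix ι ι ℝ), Hᵀ = H → H.trace = 0 →
      (Finset.univ.filter (fun j => H j j ≠ 0)).card ≤ k →
      ∃ O : Matrix ι ι ℝ, Oᵀ * O = 1 ∧ ∀ j, (Oᵀ * H * O) j j = 0 := by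
  intro k
  induction k with
  | zero =>
    intro H hsym htr hcard
    have hall : ∀ j, H j j = 0 := by
      intro j
      by_contra hj
      have : j ∈ Finset.univ.filter (fun j => H j j ≠ 0) := by
        simp [hj]
      have := Finset.card_pos.mpr ⟨j, this⟩
      omega
    refine ⟨1, by simp, fun j => ?_⟩
    rw [Matrix.transpose_one, Matrix.one_mul, Matrix.mul_one]
    exact hall j
  | succ k IH =>
    intro H hsym htr hcard
    by_cases hall : ∀ j, H j j = 0
    · refine ⟨1, by simp, fun j => ?_⟩
      rw [Matrix.transpose_one, Matrix.one_mul, Matrix.mul_one]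
      exact hall j
    · push_neg at hall
      obtain ⟨j₀, hj₀⟩ := hall
      have htr' : ∑ i, H i i = 0 := htr
      have hexpos : ∃ a, 0 < H a a := by
        by_contra hcon
        push_neg at hcon
        have hneg : H j₀ j₀ < 0 := lt_of_le_of_ne (hcon j₀) hj₀
        have hlt : ∑ i, H i i < ∑ _i : ι, (0 : ℝ) :=
          Finset.sum_lt_sum (fun i _ => hcon i) ⟨j₀, Finset.mem_univ j₀, hneg⟩
        rw [Finset.sum_const_zero] at hlt
        linarith
      have hexneg : ∃ b, H b b < 0 := by
        by_contra hcon
        push_neg at hcon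
        have hpos : 0 < H j₀ j₀ := lt_of_le_of_ne (hcon j₀) (Ne.symm hj₀)
        have hlt : ∑ _i : ι, (0 : ℝ) < ∑ i, H i i :=
          Finset.sum_lt_sum (fun i _ => hcon i) ⟨j₀, Finset.mem_univ j₀, hpos⟩
        rw [Finset.sum_const_zero] at hlt
        linarith
      obtain ⟨a, ha⟩ := hexpos
      obtain ⟨b, hb⟩ := hexneg
      have hab_ne : a ≠ b := by
        intro h
        rw [h] at ha
        linarith
      obtain ⟨G, hG, hGa0, hGoth⟩ := givens_exists H hsym hab_ne ha hb
      have hG' : G * Gᵀ = 1 := mul_eq_one_comm.mp hG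
      have hH'sym : (Gᵀ * H * G)ᵀ = Gᵀ * H * G := by
        rw [Matrix.transpose_mul, Matrix.transpose_mul, Matrix.transpose_transpose, hsym,
          Matrix.mul_assoc]
      have hH'tr : (Gᵀ * H * G).trace = 0 := by
        rw [Matrix.trace_mul_comm, ← Matrix.mul_assoc, hG', Matrix.one_mul, htr]
      have hsubset : (Finset.univ.filter (fun j => (Gᵀ * H * G) j j ≠ 0)) ⊆
          (Finset.univ.filter (fun j => H j j ≠ 0)).erase a := by
        intro j hj
        rw [Finset.mem_filter] at hj
        have hj' := hj.2
        rw [Finset.mem_erase]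
        constructor
        · intro h
          rw [h] at hj'
          exact hj' hGa0
        · rw [Finset.mem_filter]
          refine ⟨Finset.mem_univ j, ?_⟩
          by_cases hjb : j = b
          · rw [hjb]
            exact ne_of_lt hb
          · by_cases hja : j = a
            · rw [hja]
              exact ne_of_gt ha
            · rw [← hGoth j hja hjb]
              exact hj'
      have hcard' : (Finset.univ.filter (fun j => (Gᵀ * H * G) j j ≠ 0)).card ≤ k := by
        have h1 := Finset.card_le_card hsubset
        have hamem : a ∈ Finset.univ.filter (fun j => H j j ≠ 0) := by
          simp [ne_of_gt ha]
        have h2 := Finset.card_erase_of_mem hamem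
        omega
      obtain ⟨O', hO', hdiag⟩ := IH (Gᵀ * H * G) hH'sym hH'tr hcard'
      refine ⟨G * O', ?_, fun j => ?_⟩
      · rw [Matrix.transpose_mul]
        calc O'ᵀ * Gᵀ * (G * O') = O'ᵀ * (Gᵀ * G) * O' := by simp only [Matrix.mul_assoc]
          _ = 1 := by rw [hG, Matrix.mul_one, hO']
      · have heq : (G * O')ᵀ * H * (G * O') = O'ᵀ * (Gᵀ * H * G) * O' := by
          rw [Matrix.transpose_mul]
          simp only [Matrix.mul_assoc]
        rw [heq]
        exact hdiag j

theorem zero_diag {ι : Type*} [Fintype ι] [DecidableEq ι] (H : Matrix ι ι ℝ)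
    (hsym : Hᵀ = H) (htr : H.trace = 0) :
    ∃ O : Matrix ι ι ℝ, Oᵀ * O = 1 ∧ ∀ j, (Oᵀ * H * O) j j = 0 :=
  zero_diag_aux _ H hsym htr le_rfl

def Fm : TwoQubitMat := sigmaY ⊗ₖ sigmaY

lemma Fm_symm : Fmᵀ = Fm := by
  ext ⟨i, j⟩ ⟨k, l⟩
  fin_cases i <;> fin_cases j <;> fin_cases k <;> fin_cases l <;>
    simp [Fm, sigmaY, Matrix.transpose_apply, Matrix.kroneckerMap_apply] <;> ring

lemma Fm_real : MCm Fm = Fm := by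
  ext ⟨i, j⟩ ⟨k, l⟩
  fin_cases i <;> fin_cases j <;> fin_cases k <;> fin_cases l <;>
    simp [Fm, MCm, sigmaY, Matrix.kroneckerMap_apply] <;> ring

lemma quadFm (w : Fin 2 × Fin 2 → ℂ) :
    ∑ p, ∑ q, w p * Fm p q * w q
      = -2 * (w (0,0) * w (1,1) - w (0,1) * w (1,0)) := by
  rw [Fintype.sum_prod_type]
  simp only [Fintype.sum_prod_type, Fin.sum_univ_two]
  simp [Fm, sigmaY, Matrix.kroneckerMap_apply]
  ring

lemma diag_triple {ι R : Type*} [Fintype ι] [DecidableEq ι] [CommRing R]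
    (M : Matrix ι ι R) (v : ι → R) (j : ι) :
    (Mᵀ * Matrix.diagonal v * M) j j = ∑ l, M l j * v l * M l j := by
  rw [Matrix.mul_apply]
  refine Finset.sum_congr rfl fun l _ => ?_
  rw [Matrix.mul_diagonal, Matrix.transpose_apply]


theorem exists_optimal_flat_decomposition (ρ : TwoQubitMat)
    (hpsd : ρ.PosSemidef) (htr : ρ.trace = 1) :
    ∃ (n : ℕ) (χ : Fin n → Fin 2 → Fin 2 → ℂ),
      (∀ k, χ k ≠ 0) ∧
      (∀ i j i' j' : Fin 2,
        ρ (i, j) (i', j') = ∑ k, χ k i j * (starRingEnd ℂ) (χ k i' j')) ∧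
      (∀ k, conc2 (χ k) / (∑ i, ∑ j, Complex.normSq (χ k i j)) = CoA ρ) ∧
      ∑ k, conc2 (χ k) = CoA ρ := by
  classical
  set S := matSqrt ρ with hSdef
  have hSeq : S = matSqrt ρ := hSdef
  have hSpsd : S.PosSemidef := by rw [hSeq]; exact matSqrt_posSemidef hpsd
  have hSherm : Sᴴ = S := hSpsd.1
  have hSS : S * S = ρ := by rw [hSeq]; exact matSqrt_mul_self hpsd
  have hST : Sᵀ = MCm S := by
    have h := conjT_eq_MCm S
    rw [hSherm] at h
    conv_rhs => rw [h]
    rw [MCm_MCm]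
  have hMCST : (MCm S)ᵀ = S := by
    rw [MCm_transpose, ← conjT_eq_MCm, hSherm]
  -- the symmetric matrix A
  set A : TwoQubitMat := S * Fm * MCm S with hAdef
  have hAsym : Aᵀ = A := by
    rw [hAdef, Matrix.transpose_mul, Matrix.transpose_mul, hMCST, Fm_symm, hST,
      Matrix.mul_assoc]
  obtain ⟨U, d, hU, hd, hAdec⟩ := takagi A hAsym
  have hU' : U * Uᴴ = 1 := mul_eq_one_comm.mp hU
  set D : TwoQubitMat := Matrix.diagonal (fun i => (d i : ℂ)) with hDdef
  set C : ℝ := ∑ i, d i with hCdef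
  have hC0 : 0 ≤ C := Finset.sum_nonneg fun i _ => hd i
  have hUT : Uᵀ * MCm U = 1 := by
    have h : Uᵀ = MCm (Uᴴ) := by rw [conjT_eq_MCm, MCm_MCm]
    rw [h, ← MCm_mul, hU, MCm_one]
  have hUT' : (MCm U)ᵀ * U = 1 := by
    have h : ((MCm U)ᵀ * U)ᵀ = 1 := by
      rw [Matrix.transpose_mul, Matrix.transpose_transpose, hUT]
    calc (MCm U)ᵀ * U = (((MCm U)ᵀ * U)ᵀ)ᵀ := by rw [Matrix.transpose_transpose]
      _ = 1 := by rw [h, Matrix.transpose_one]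
  have hDH : Dᴴ = D := by
    ext i j
    simp only [Matrix.conjTranspose_apply, hDdef, Matrix.diagonal_apply]
    by_cases h : i = j
    · subst h
      simp [Complex.conj_ofReal]
    · simp [h, Ne.symm h]
  have hDreal : MCm D = D := by
    ext i j
    simp only [MCm, Matrix.map_apply, hDdef, Matrix.diagonal_apply, apply_ite (starRingEnd ℂ)]
    simp [Complex.conj_ofReal]
  -- CoA ρ = C
  have hAH : Aᴴ = MCm S * (Fm * S) := by
    rw [hAdef, Matrix.conjTranspose_mul, Matrix.conjTranspose_mul, MCm_conjT, hSherm,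
      conjT_eq_MCm Fm, Fm_symm, Fm_real, hST]
  have hAAH : A * Aᴴ = S * spinFlip ρ * S := by
    rw [hAH, hAdef]
    have hsf : spinFlip ρ = Fm * MCm ρ * Fm := rfl
    rw [hsf]
    have hMCρ : MCm ρ = MCm S * MCm S := by rw [← MCm_mul, hSS]
    rw [hMCρ]
    simp only [Matrix.mul_assoc]
  have hIpsd : (S * spinFlip ρ * S).PosSemidef := by
    rw [← hAAH]
    exact posSemidef_self_mul_conjTranspose A
  have hAH2 : Aᴴ = MCm U * (D * Uᴴ) := by
    rw [hAdec, Matrix.conjTranspose_mul, Matrix.conjTranspose_mul, hDH]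
    have h1 : Uᵀᴴ = MCm U := by rw [conjT_eq_MCm, Matrix.transpose_transpose]
    rw [h1]
  have hRmat : Rmat ρ = U * D * Uᴴ := by
    have hRdef : Rmat ρ = matSqrt (S * spinFlip ρ * S) := rfl
    have hsqrt : matSqrt (S * spinFlip ρ * S) = matSqrt (S * spinFlip ρ * S) := rfl
    have hDpsd : D.PosSemidef := by
      rw [hDdef, Matrix.posSemidef_diagonal_iff]
      intro i
      exact Complex.zero_le_real.mpr (hd i)
    have hRpsd : (U * D * Uᴴ).PosSemidef := hDpsd.mul_mul_conjTranspose_same U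
    have hsq : (U * D * Uᴴ) ^ 2 = S * spinFlip ρ * S := by
      rw [pow_two]
      have h3 : (U * D * Uᴴ) * (U * D * Uᴴ) = U * (D * (D * Uᴴ)) := by
        simp only [Matrix.mul_assoc]
        rw [← Matrix.mul_assoc Uᴴ U, hU, Matrix.one_mul]
      have h2 : A * Aᴴ = U * (D * (D * Uᴴ)) := by
        rw [hAH2, hAdec]
        simp only [Matrix.mul_assoc]
        rw [← Matrix.mul_assoc Uᵀ (MCm U), hUT, Matrix.one_mul]
      rw [h3, ← h2, hAAH]
    rw [hRdef, hsqrt]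
    exact (eq_matSqrt_of_sq_eq hRpsd hIpsd hsq).symm
  have hCoA : CoA ρ = C := by
    rw [CoA, hRmat, Matrix.trace_mul_cycle, hU, Matrix.one_mul, hDdef,
      Matrix.trace_diagonal, ← Complex.ofReal_sum, Complex.ofReal_re, hCdef]
  -- the Gram-type matrix
  set Γ : TwoQubitMat := Uᴴ * ρ * U with hΓdef
  have hΓH : Γᴴ = Γ := by
    rw [hΓdef, Matrix.conjTranspose_mul, Matrix.conjTranspose_mul, hpsd.1,
      Matrix.conjTranspose_conjTranspose, Matrix.mul_assoc]
  have hΓtr : Γ.trace = 1 := by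
    rw [hΓdef, Matrix.trace_mul_cycle, hU', Matrix.one_mul, htr]
  set Gre : Matrix (Fin 2 × Fin 2) (Fin 2 × Fin 2) ℝ :=
    Matrix.of (fun a b => (Γ a b).re) with hGredef
  set Hm : Matrix (Fin 2 × Fin 2) (Fin 2 × Fin 2) ℝ := Matrix.diagonal d - C • Gre with hHmdef
  have hGreSym : Greᵀ = Gre := by
    ext a b
    show (Γ b a).re = (Γ a b).re
    have h2 := congrFun (congrFun hΓH a) b
    rw [Matrix.conjTranspose_apply] at h2
    rw [← h2]
    simp
  have hHsym : Hmᵀ = Hm := by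
    rw [hHmdef, Matrix.transpose_sub, Matrix.diagonal_transpose, Matrix.transpose_smul, hGreSym]
  have hGre_tr : Gre.trace = 1 := by
    have h1 : Gre.trace = (Γ.trace).re := by
      rw [Matrix.trace, Matrix.trace, Complex.re_sum]
      rfl
    rw [h1, hΓtr]
    simp
  have hHtr : Hm.trace = 0 := by
    rw [hHmdef, Matrix.trace_sub, Matrix.trace_smul, Matrix.trace_diagonal, hGre_tr, ← hCdef]
    simp
  obtain ⟨O, hO, hOdiag⟩ := zero_diag Hm hHsym hHtr
  have hO' : O * Oᵀ = 1 := mul_eq_one_comm.mp hO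
  set Oc : TwoQubitMat := O.map (Complex.ofRealHom : ℝ →+* ℂ) with hOcdef
  have hOcT : Ocᵀ * Oc = 1 := by
    rw [hOcdef, ← Matrix.transpose_map, ← Matrix.map_mul, hO]
    exact Matrix.map_one _ (map_zero _) (map_one _)
  have hOc' : Oc * Ocᵀ = 1 := mul_eq_one_comm.mp hOcT
  have hOcH : Ocᴴ = Ocᵀ := by
    ext i j
    rw [Matrix.conjTranspose_apply, Matrix.transpose_apply, hOcdef, Matrix.map_apply]
    exact Complex.conj_ofReal _
  -- the final matrix of vectors
  set X : TwoQubitMat := S * U * Oc with hXdef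
  have hXH : Xᴴ = Ocᵀ * (Uᴴ * S) := by
    rw [hXdef, Matrix.conjTranspose_mul, Matrix.conjTranspose_mul, hSherm, hOcH]
  have hXXH : X * Xᴴ = ρ := by
    rw [hXH, hXdef]
    calc S * U * Oc * (Ocᵀ * (Uᴴ * S))
        = S * (U * ((Oc * Ocᵀ) * (Uᴴ * S))) := by simp only [Matrix.mul_assoc]
      _ = S * (U * (Uᴴ * S)) := by rw [hOc', Matrix.one_mul]
      _ = S * ((U * Uᴴ) * S) := by simp only [Matrix.mul_assoc]
      _ = ρ := by rw [hU', Matrix.one_mul, hSS]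
  -- tau matrix
  have hMCA : MCm A = MCm S * Fm * S := by
    rw [hAdef, MCm_mul, MCm_mul, MCm_MCm, Fm_real]
  have hMCAdec : MCm A = MCm U * D * (MCm U)ᵀ := by
    rw [hAdec, MCm_mul, MCm_mul, hDreal, MCm_transpose]
  have hXT : Xᵀ = Ocᵀ * Uᵀ * Sᵀ := by
    rw [hXdef, Matrix.transpose_mul, Matrix.transpose_mul, Matrix.mul_assoc]
  have hτX : Xᵀ * Fm * X = Ocᵀ * D * Oc := by
    rw [hXT, hXdef, hST]
    have hmid : Uᵀ * (MCm S * Fm * S) * U = D := by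
      rw [← hMCA, hMCAdec]
      calc Uᵀ * (MCm U * D * (MCm U)ᵀ) * U
          = (Uᵀ * MCm U) * D * ((MCm U)ᵀ * U) := by simp only [Matrix.mul_assoc]
        _ = D := by rw [hUT, hUT', Matrix.one_mul, Matrix.mul_one]
    calc Ocᵀ * Uᵀ * MCm S * Fm * (S * U * Oc)
        = Ocᵀ * (Uᵀ * (MCm S * Fm * S) * U) * Oc := by simp only [Matrix.mul_assoc]
      _ = Ocᵀ * D * Oc := by rw [hmid, Matrix.mul_assoc]
  -- Gram matrix
  have hXHX : Xᴴ * X = Ocᵀ * Γ * Oc := by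
    rw [hXH, hXdef, hΓdef, ← hSS]
    calc Ocᵀ * (Uᴴ * S) * (S * U * Oc)
        = Ocᵀ * (Uᴴ * (S * S) * U) * Oc := by simp only [Matrix.mul_assoc]
      _ = Ocᵀ * (Uᴴ * (S * S) * U) * Oc := rfl
  -- real diagonal quantities
  set gr : Fin 2 × Fin 2 → ℝ := fun j => ∑ l, O l j * d l * O l j with hgrdef
  have hgr : ∀ j, (Ocᵀ * D * Oc) j j = ((gr j : ℝ) : ℂ) := by
    intro j
    rw [hDdef, diag_triple, hgrdef]
    push_cast
    refine Finset.sum_congr rfl fun l _ => ?_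
    rw [hOcdef]
    simp only [Matrix.map_apply, Complex.ofRealHom_eq_coe]
  set nrm : Fin 2 × Fin 2 → ℝ := fun k => ((Xᴴ * X) k k).re with hnrmdef
  have hnrm_gre : ∀ k, nrm k = (Oᵀ * Gre * O) k k := by
    intro k
    show ((Xᴴ * X) k k).re = _
    rw [hXHX, triple_diag, triple_diag, Complex.re_sum]
    refine Finset.sum_congr rfl fun p _ => ?_
    rw [Complex.re_sum]
    refine Finset.sum_congr rfl fun q _ => ?_
    have h5 : Oc p k * Γ p q * Oc q k = ((O p k * O q k : ℝ) : ℂ) * Γ p q := by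
      rw [hOcdef]
      simp only [Matrix.map_apply, Complex.ofRealHom_eq_coe]
      push_cast
      ring
    rw [h5, Complex.re_ofReal_mul]
    show O p k * O q k * (Γ p q).re = O p k * (Γ p q).re * O q k
    ring
  have hflat : ∀ j, gr j = C * nrm j := by
    intro j
    have h0 := hOdiag j
    have hsplit : Oᵀ * Hm * O = Oᵀ * Matrix.diagonal d * O - C • (Oᵀ * Gre * O) := by
      rw [hHmdef, Matrix.mul_sub, Matrix.sub_mul, Matrix.mul_smul, Matrix.smul_mul]
    rw [hsplit] at h0
    have h1 : (Oᵀ * Matrix.diagonal d * O) j j - C * (Oᵀ * Gre * O) j j = 0 := h0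
    rw [diag_triple] at h1
    rw [hgrdef, hnrm_gre]
    have := sub_eq_zero.mp h1
    exact this
  have hnrm_nonneg_eq : ∀ k, (∑ i, ∑ j, Complex.normSq (X (i, j) k)) = nrm k := by
    intro k
    show _ = ((Xᴴ * X) k k).re
    have h1 : (Xᴴ * X) k k = ∑ p, ((Complex.normSq (X p k) : ℝ) : ℂ) := by
      rw [Matrix.mul_apply]
      refine Finset.sum_congr rfl fun p _ => ?_
      rw [Matrix.conjTranspose_apply]
      exact (Complex.normSq_eq_conj_mul_self).symm
    rw [h1, Complex.re_sum, Fintype.sum_prod_type]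
    refine Finset.sum_congr rfl fun p _ => ?_
    refine Finset.sum_congr rfl fun q _ => ?_
    rw [Complex.ofReal_re]
  have hnrm_nonneg : ∀ k, 0 ≤ nrm k := by
    intro k
    rw [← hnrm_nonneg_eq k]
    exact Finset.sum_nonneg fun i _ => Finset.sum_nonneg fun j _ => Complex.normSq_nonneg _
  -- concurrence of each column
  have hconc : ∀ k, conc2 (fun i j => X (i, j) k) = C * nrm k := by
    intro k
    have h2 : (Xᵀ * Fm * X) k k
        = -2 * (X (0,0) k * X (1,1) k - X (0,1) k * X (1,0) k) := by
      rw [triple_diag]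
      exact quadFm (fun p => X p k)
    have h1 : (Xᵀ * Fm * X) k k = ((C * nrm k : ℝ) : ℂ) := by
      rw [hτX, hgr, hflat]
    have hdet : X (0,0) k * X (1,1) k - X (0,1) k * X (1,0) k
        = ((-(C * nrm k) / 2 : ℝ) : ℂ) := by
      have h3 := h2.symm.trans h1
      have h4 : ((-(C * nrm k) / 2 : ℝ) : ℂ) = -(((C * nrm k : ℝ) : ℂ)) / 2 := by push_cast; ring
      rw [h4]
      linear_combination (-1/2 : ℂ) * h3
    show 2 * ‖(fun i j => X (i, j) k) 0 0 * (fun i j => X (i, j) k) 1 1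
      - (fun i j => X (i, j) k) 0 1 * (fun i j => X (i, j) k) 1 0‖ = C * nrm k
    simp only
    rw [show ((0 : Fin 2), (0 : Fin 2)) = ((0,0) : Fin 2 × Fin 2) from rfl]
    rw [hdet, Complex.norm_real, Real.norm_eq_abs]
    rw [abs_div, abs_neg, _root_.abs_of_nonneg (mul_nonneg hC0 (hnrm_nonneg k))]
    norm_num
    ring
  -- sum of norms is 1
  have hsum_nrm : ∑ k, nrm k = 1 := by
    have h1 : (Xᴴ * X).trace = 1 := by
      rw [hXHX, Matrix.trace_mul_cycle, hOc', Matrix.one_mul, hΓtr]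
    have h2 : ∑ k, nrm k = ((Xᴴ * X).trace).re := by
      rw [Matrix.trace, Complex.re_sum]
      rfl
    rw [h2, h1]
    simp
  -- package up
  set y : (Fin 2 × Fin 2) → Fin 2 → Fin 2 → ℂ := fun k i j => X (i, j) k with hydef
  have hy_ne : ∀ k, y k ≠ 0 → nrm k ≠ 0 := by
    intro k hk h0
    apply hk
    rw [← hnrm_nonneg_eq k] at h0
    funext i j
    have h1 := (Finset.sum_eq_zero_iff_of_nonneg
      (fun i _ => Finset.sum_nonneg fun j _ => Complex.normSq_nonneg _)).mp h0 i (Finset.mem_univ i)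
    have h2 := (Finset.sum_eq_zero_iff_of_nonneg
      (fun j _ => Complex.normSq_nonneg _)).mp h1 j (Finset.mem_univ j)
    exact Complex.normSq_eq_zero.mp h2
  have hy_conc0 : ∀ k, y k = 0 → conc2 (y k) = 0 := by
    intro k hk
    rw [hk, conc2]
    simp
  set s : Finset (Fin 2 × Fin 2) := Finset.univ.filter (fun k => y k ≠ 0) with hsdef
  have htransC : ∀ f : (Fin 2 × Fin 2) → ℂ, (∀ k, y k = 0 → f k = 0) →
      (∑ m : Fin s.card, f (s.equivFin.symm m).1) = ∑ k, f k := by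
    intro f hf
    rw [Equiv.sum_comp s.equivFin.symm (fun x : {x // x ∈ s} => f x.1)]
    rw [Finset.sum_coe_sort s (fun x => f x)]
    apply Finset.sum_subset (Finset.subset_univ s)
    intro x _ hx
    rw [hsdef, Finset.mem_filter] at hx
    push_neg at hx
    exact hf x (hx (Finset.mem_univ x))
  have htransR : ∀ f : (Fin 2 × Fin 2) → ℝ, (∀ k, y k = 0 → f k = 0) →
      (∑ m : Fin s.card, f (s.equivFin.symm m).1) = ∑ k, f k := by
    intro f hf
    rw [Equiv.sum_comp s.equivFin.symm (fun x : {x // x ∈ s} => f x.1)]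
    rw [Finset.sum_coe_sort s (fun x => f x)]
    apply Finset.sum_subset (Finset.subset_univ s)
    intro x _ hx
    rw [hsdef, Finset.mem_filter] at hx
    push_neg at hx
    exact hf x (hx (Finset.mem_univ x))
  refine ⟨s.card, fun m => y (s.equivFin.symm m).1, ?_, ?_, ?_, ?_⟩
  · intro m
    have hmem : (s.equivFin.symm m).1 ∈ Finset.univ.filter (fun k => y k ≠ 0) :=
      (s.equivFin.symm m).2
    rw [Finset.mem_filter] at hmem
    exact hmem.2
  · intro i j i' j'
    have hρ : ρ (i, j) (i', j') = ∑ k, y k i j * (starRingEnd ℂ) (y k i' j') := by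
      rw [← hXXH, Matrix.mul_apply]
      refine Finset.sum_congr rfl fun k _ => ?_
      rw [Matrix.conjTranspose_apply]
      rfl
    rw [hρ]
    exact (htransC (fun k => y k i j * (starRingEnd ℂ) (y k i' j'))
      (fun k hk => by simp [hk])).symm
  · intro m
    set k : Fin 2 × Fin 2 := (s.equivFin.symm m).1 with hkdef
    have hkne : y k ≠ 0 := by
      have hmem : (s.equivFin.symm m).1 ∈ Finset.univ.filter (fun k => y k ≠ 0) :=
        (s.equivFin.symm m).2
      rw [Finset.mem_filter] at hmem
      exact hmem.2
    have hnk : nrm k ≠ 0 := hy_ne k hkne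
    have h1 : conc2 (y k) = C * nrm k := hconc k
    have h2 : (∑ i, ∑ j, Complex.normSq (y k i j)) = nrm k := hnrm_nonneg_eq k
    rw [h1, h2, hCoA]
    field_simp
  · have h1 : ∑ m : Fin s.card, conc2 (y (s.equivFin.symm m).1)
        = ∑ k, conc2 (y k) := htransR (fun k => conc2 (y k)) hy_conc0
    rw [h1]
    have h2 : ∑ k, conc2 (y k) = ∑ k, C * nrm k := Finset.sum_congr rfl fun k _ => hconc k
    rw [h2, ← Finset.mul_sum, hsum_nrm, mul_one, hCoA]
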